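/- Two random variables X and Y on a probability space are comonotonic (i.e., (X(ω)−X(ω'))(Y(ω)−Y(ω')) ≥ 0 holds ℙ⊗ℙ-a.s.) if and only if their joint distribution function satisfies F_{X,Y}(a,b) = min(F_X(a), F_Y(b)) for all a,b ∈ ℝ, which in turn holds if and only if (X,Y) has the same law as (F_X^←(U), F_Y^←(U)) for U uniformly distributed on [0,1]. -/

import Mathlib

open MeasureTheory


set_option linter.unusedSectionVars false
set_option maxHeartbeats 1000000

open MeasureTheory ProbabilityTheory Set Filter Topology

/-- The lower quantile function of a measure on `ℝ`. -/
noncomputable def lq (μ : Measure ℝ) (u : ℝ) : ℝ :=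
  sInf {x : ℝ | u ≤ (μ (Set.Iic x)).toReal}

section helpers
variable {μ : Measure ℝ} [IsProbabilityMeasure μ]

lemma lq_eq (u : ℝ) : lq μ u = sInf {x | u ≤ cdf μ x} := by
  simp_rw [lq, cdf_eq_real, measureReal_def]

lemma S_nonempty {u : ℝ} (hu : u < 1) : {x | u ≤ cdf μ x}.Nonempty :=
  ((tendsto_cdf_atTop μ).eventually (eventually_ge_nhds hu)).exists

lemma S_bddBelow {u : ℝ} (hu : 0 < u) : BddBelow {x | u ≤ cdf μ x} := by
  obtain ⟨x₀, hx₀⟩ := eventually_atBot.1 ((tendsto_cdf_atBot μ).eventually (eventually_lt_nhds hu))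
  refine ⟨x₀, fun x hx => ?_⟩
  by_contra hc
  exact absurd hx (not_le.2 (hx₀ x (le_of_not_ge hc)))

lemma lq_le_iff {u : ℝ} (hu : u ∈ Ioo (0:ℝ) 1) (a : ℝ) :
    lq μ u ≤ a ↔ u ≤ cdf μ a := by
  rw [lq_eq]
  constructor
  · intro h
    have key : ∀ x ∈ Ioi a, u ≤ cdf μ x := by
      intro x hx
      obtain ⟨s, hs, hsx⟩ := exists_lt_of_csInf_lt (S_nonempty hu.2) (lt_of_le_of_lt h hx)
      exact hs.trans ((monotone_cdf μ) hsx.le)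
    have hrc : Filter.Tendsto (cdf μ) (nhdsWithin a (Ioi a)) (nhds (cdf μ a)) :=
      ((cdf μ).right_continuous a).mono_left (nhdsWithin_mono _ Ioi_subset_Ici_self)
    exact ge_of_tendsto hrc (eventually_nhdsWithin_of_forall key)
  · intro h
    exact csInf_le (S_bddBelow hu.1) h

lemma lq_monoOn : MonotoneOn (lq μ) (Ioo (0:ℝ) 1) := by
  intro u hu v hv huv
  rw [lq_eq, lq_eq]
  exact csInf_le_csInf (S_bddBelow hu.1) (S_nonempty hv.2) (fun x hx => le_trans huv hx)

end helpers

noncomputable def proj01 (u : ℝ) : ℝ := if u ∈ Set.Ioo (0:ℝ) 1 then u else 1/2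

lemma proj01_mem (u : ℝ) : proj01 u ∈ Set.Ioo (0:ℝ) 1 := by
  unfold proj01; split
  · assumption
  · norm_num

lemma proj01_eq {u : ℝ} (hu : u ∈ Set.Ioo (0:ℝ) 1) : proj01 u = u := if_pos hu

noncomputable def lq' (μ : Measure ℝ) (u : ℝ) : ℝ := lq μ (proj01 u)

section helpers2
variable {μ : Measure ℝ} [IsProbabilityMeasure μ]

lemma measurable_lq' : Measurable (lq' μ) := by
  apply measurable_of_Iic
  intro a
  have : lq' μ ⁻¹' Iic a =
      (Ioo (0:ℝ) 1 ∩ Iic (cdf μ a)) ∪ ((Ioo (0:ℝ) 1)ᶜ ∩ {u : ℝ | lq μ (1/2) ≤ a}) := by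
    ext u
    by_cases hu : u ∈ Ioo (0:ℝ) 1
    · simp only [mem_preimage, mem_Iic, lq', proj01_eq hu, mem_union, mem_inter_iff, hu,
        true_and, mem_compl_iff, not_true_eq_false, false_and, or_false]
      exact lq_le_iff hu a
    · simp [lq', proj01, hu]
  rw [this]
  exact ((measurableSet_Ioo.inter measurableSet_Iic).union
    (measurableSet_Ioo.compl.inter (MeasurableSet.const _)))

lemma lq'_comono {μX μY : Measure ℝ} [IsProbabilityMeasure μX] [IsProbabilityMeasure μY]
    (u v : ℝ) : 0 ≤ (lq' μX u - lq' μX v) * (lq' μY u - lq' μY v) := by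
  rcases le_total (proj01 u) (proj01 v) with h | h
  · have h1 := lq_monoOn (μ := μX) (proj01_mem u) (proj01_mem v) h
    have h2 := lq_monoOn (μ := μY) (proj01_mem u) (proj01_mem v) h
    have := mul_nonneg (sub_nonneg.2 h1) (sub_nonneg.2 h2)
    unfold lq'; nlinarith
  · have h1 := lq_monoOn (μ := μX) (proj01_mem v) (proj01_mem u) h
    have h2 := lq_monoOn (μ := μY) (proj01_mem v) (proj01_mem u) h
    unfold lq'
    exact mul_nonneg (sub_nonneg.2 h1) (sub_nonneg.2 h2)

end helpers2


section measures

instance vol01_prob : IsProbabilityMeasure (volume.restrict (Set.Icc (0:ℝ) 1)) :=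
  ⟨by rw [Measure.restrict_apply_univ, Real.volume_Icc]; norm_num⟩

lemma vol_pair_null : volume ({0, 1} : Set ℝ) = 0 :=
  (Set.toFinite _).measure_zero _

lemma vol01_Ioo_compl : (volume.restrict (Set.Icc (0:ℝ) 1)) ((Set.Ioo (0:ℝ) 1)ᶜ) = 0 := by
  rw [Measure.restrict_apply measurableSet_Ioo.compl]
  refine measure_mono_null (fun u hu => ?_) vol_pair_null
  obtain ⟨hu1, hu2⟩ := hu
  simp only [mem_compl_iff, mem_Ioo, not_and, not_lt] at hu1
  rcases eq_or_lt_of_le hu2.1 with h | h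
  · exact Or.inl h.symm
  · exact Or.inr (le_antisymm hu2.2 (hu1 h))

variable {μX μY : Measure ℝ} [IsProbabilityMeasure μX] [IsProbabilityMeasure μY]

lemma map_lq'_apply (a b : ℝ) :
    ((volume.restrict (Set.Icc (0:ℝ) 1)).map (fun u => (lq' μX u, lq' μY u)))
        (Set.Iic a ×ˢ Set.Iic b) = min (μX (Set.Iic a)) (μY (Set.Iic b)) := by
  set m := min (cdf μX a) (cdf μY b) with hm
  have hm0 : 0 ≤ m := le_min (cdf_nonneg _ _) (cdf_nonneg _ _)
  have hm1 : m ≤ 1 := min_le_of_left_le (cdf_le_one _ _)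
  have hg : Measurable (fun u => (lq' μX u, lq' μY u)) :=
    measurable_lq'.prodMk measurable_lq'
  rw [Measure.map_apply hg (measurableSet_Iic.prod measurableSet_Iic),
    Measure.restrict_apply (hg (measurableSet_Iic.prod measurableSet_Iic))]
  set T := (fun u => (lq' μX u, lq' μY u)) ⁻¹' (Set.Iic a ×ˢ Set.Iic b) with hT
  have hstep : volume (T ∩ Set.Icc (0:ℝ) 1) = volume (T ∩ Set.Ioo (0:ℝ) 1) := by
    apply le_antisymm
    · have hsub : T ∩ Set.Icc (0:ℝ) 1 ⊆ (T ∩ Set.Ioo (0:ℝ) 1) ∪ {0, 1} := by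
        rintro u ⟨huT, hu0, hu1⟩
        rcases eq_or_lt_of_le hu0 with h | h
        · exact Or.inr (Or.inl h.symm)
        rcases eq_or_lt_of_le hu1 with h' | h'
        · exact Or.inr (Or.inr h')
        · exact Or.inl ⟨huT, h, h'⟩
      refine (measure_mono hsub).trans ?_
      refine (measure_union_le _ _).trans ?_
      rw [vol_pair_null, add_zero]
    · exact measure_mono (inter_subset_inter_right _ Ioo_subset_Icc_self)
  have hTIoo : T ∩ Set.Ioo (0:ℝ) 1 = Set.Iic m ∩ Set.Ioo (0:ℝ) 1 := by
    ext u
    simp only [mem_inter_iff, and_congr_left_iff]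
    intro hu
    simp only [hT, mem_preimage, mem_prod, mem_Iic, lq', proj01_eq hu]
    rw [lq_le_iff hu a, lq_le_iff hu b, hm, le_min_iff]
  have hvol : volume (Set.Iic m ∩ Set.Ioo (0:ℝ) 1) = ENNReal.ofReal m := by
    rcases lt_or_ge m 1 with h | h
    · have : Set.Iic m ∩ Set.Ioo (0:ℝ) 1 = Set.Ioc 0 m := by
        ext u
        simp only [mem_inter_iff, mem_Iic, mem_Ioo, mem_Ioc]
        constructor
        · rintro ⟨h1, h2, h3⟩; exact ⟨h2, h1⟩
        · rintro ⟨h1, h2⟩; exact ⟨h2, h1, lt_of_le_of_lt h2 h⟩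
      rw [this, Real.volume_Ioc, sub_zero]
    · have hm' : m = 1 := le_antisymm hm1 h
      have : Set.Iic m ∩ Set.Ioo (0:ℝ) 1 = Set.Ioo 0 1 := by
        rw [hm']
        exact inter_eq_self_of_subset_right (fun u hu => hu.2.le)
      rw [this, Real.volume_Ioo, hm']; norm_num
  have hofReal : ENNReal.ofReal m = min (μX (Set.Iic a)) (μY (Set.Iic b)) := by
    rw [hm]
    rcases le_total (cdf μX a) (cdf μY b) with h | h
    · rw [min_eq_left h, ofReal_cdf,
        min_eq_left ((ofReal_cdf μX a) ▸ (ofReal_cdf μY b) ▸ ENNReal.ofReal_le_ofReal h)]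
    · rw [min_eq_right h, ofReal_cdf,
        min_eq_right ((ofReal_cdf μX a) ▸ (ofReal_cdf μY b) ▸ ENNReal.ofReal_le_ofReal h)]
  rw [hstep, hTIoo, hvol, hofReal]

end measures

lemma borelProd_eq : (inferInstance : MeasurableSpace (ℝ × ℝ)) =
    MeasurableSpace.generateFrom
      (Set.image2 (· ×ˢ ·) (Set.range (Set.Iic : ℝ → Set ℝ)) (Set.range (Set.Iic : ℝ → Set ℝ))) := by
  have hcs : IsCountablySpanning (Set.range (Set.Iic : ℝ → Set ℝ)) := by
    refine ⟨fun n => Set.Iic (n : ℝ), fun n => Set.mem_range_self _, ?_⟩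
    ext x
    simp only [Set.mem_iUnion, Set.mem_Iic, Set.mem_univ, iff_true]
    exact exists_nat_ge x
  have h1 : (Real.measurableSpace) = MeasurableSpace.generateFrom (Set.range Set.Iic) := by
    rw [BorelSpace.measurable_eq (α := ℝ), borel_eq_generateFrom_Iic]
  rw [← generateFrom_prod_eq hcs hcs, ← h1]

lemma isPiSystem_IicProd :
    IsPiSystem (Set.image2 (· ×ˢ ·) (Set.range (Set.Iic : ℝ → Set ℝ)) (Set.range (Set.Iic : ℝ → Set ℝ))) := by
  rintro _ ⟨_, ⟨a, rfl⟩, _, ⟨b, rfl⟩, rfl⟩ _ ⟨_, ⟨c, rfl⟩, _, ⟨d, rfl⟩, rfl⟩ -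
  rw [Set.prod_inter_prod, Set.Iic_inter_Iic, Set.Iic_inter_Iic]
  exact Set.mem_image2_of_mem (Set.mem_range_self _) (Set.mem_range_self _)
/-- Equivalent characterizations of comonotonicity. -/
theorem comonotonic_iff {Ω : Type*} [MeasurableSpace Ω]
    (P : Measure Ω) [IsProbabilityMeasure P]
    (X Y : Ω → ℝ) (hX : Measurable X) (hY : Measurable Y) :
    -- (i) ↔ (ii)
    ((∀ᵐ p ∂(P.prod P), 0 ≤ (X p.1 - X p.2) * (Y p.1 - Y p.2)) ↔
      (∀ a b : ℝ,
        P {ω | X ω ≤ a ∧ Y ω ≤ b} = min (P {ω | X ω ≤ a}) (P {ω | Y ω ≤ b}))) ∧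
    -- (ii) ↔ (iii)
    ((∀ a b : ℝ,
        P {ω | X ω ≤ a ∧ Y ω ≤ b} = min (P {ω | X ω ≤ a}) (P {ω | Y ω ≤ b})) ↔
      P.map (fun ω => (X ω, Y ω)) =
        (volume.restrict (Set.Icc (0:ℝ) 1)).map
          (fun u => (lq (P.map X) u, lq (P.map Y) u))) := by
  set μX := P.map X with hμX
  set μY := P.map Y with hμY
  haveI : IsProbabilityMeasure μX := Measure.isProbabilityMeasure_map hX.aemeasurable
  haveI : IsProbabilityMeasure μY := Measure.isProbabilityMeasure_map hY.aemeasurable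
  have hXY : Measurable (fun ω => (X ω, Y ω)) := hX.prodMk hY
  haveI : IsProbabilityMeasure (P.map (fun ω => (X ω, Y ω))) :=
    Measure.isProbabilityMeasure_map hXY.aemeasurable
  set ν := volume.restrict (Set.Icc (0:ℝ) 1) with hν
  have hg' : Measurable (fun u => (lq' μX u, lq' μY u)) := measurable_lq'.prodMk measurable_lq'
  haveI : IsProbabilityMeasure (ν.map (fun u => (lq' μX u, lq' μY u))) :=
    Measure.isProbabilityMeasure_map hg'.aemeasurable
  have hmapeq : ν.map (fun u => (lq μX u, lq μY u)) = ν.map (fun u => (lq' μX u, lq' μY u)) := by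
    apply Measure.map_congr
    rw [Filter.EventuallyEq, ae_iff]
    refine measure_mono_null (fun u hu => ?_) vol01_Ioo_compl
    simp only [mem_setOf_eq] at hu
    by_contra hc
    simp only [mem_compl_iff, not_not] at hc
    exact hu (by simp [lq', proj01_eq hc])
  have hPa : ∀ a : ℝ, P {ω | X ω ≤ a} = μX (Set.Iic a) := fun a => by
    rw [hμX, Measure.map_apply hX measurableSet_Iic]; rfl
  have hPb : ∀ b : ℝ, P {ω | Y ω ≤ b} = μY (Set.Iic b) := fun b => by
    rw [hμY, Measure.map_apply hY measurableSet_Iic]; rfl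
  have hPab : ∀ a b : ℝ, P {ω | X ω ≤ a ∧ Y ω ≤ b}
      = P.map (fun ω => (X ω, Y ω)) (Set.Iic a ×ˢ Set.Iic b) := fun a b => by
    rw [Measure.map_apply hXY (measurableSet_Iic.prod measurableSet_Iic)]; rfl
  have hiff2 : (∀ a b : ℝ,
      P {ω | X ω ≤ a ∧ Y ω ≤ b} = min (P {ω | X ω ≤ a}) (P {ω | Y ω ≤ b})) ↔
      P.map (fun ω => (X ω, Y ω)) = ν.map (fun u => (lq μX u, lq μY u)) := by
    constructor
    · intro h
      rw [hmapeq]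
      refine ext_of_generate_finite _ borelProd_eq isPiSystem_IicProd ?_ ?_
      · rintro _ ⟨_, ⟨a, rfl⟩, _, ⟨b, rfl⟩, rfl⟩
        rw [← hPab, h a b, hPa, hPb, map_lq'_apply]
      · rw [measure_univ, measure_univ]
    · intro h a b
      rw [hPab, h, hmapeq, map_lq'_apply, hPa, hPb]
  refine ⟨⟨?_, ?_⟩, hiff2⟩
  · -- (i) → (ii)
    intro h a b
    set A := {ω | X ω ≤ a} with hA'
    set B := {ω | Y ω ≤ b} with hB'
    have hA : MeasurableSet A := hX measurableSet_Iic
    have hB : MeasurableSet B := hY measurableSet_Iic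
    have hN := ae_iff.1 h
    have hABset : {ω | X ω ≤ a ∧ Y ω ≤ b} = A ∩ B := rfl
    have hsub : (A \ B) ×ˢ (B \ A) ⊆
        {p : Ω × Ω | ¬ 0 ≤ (X p.1 - X p.2) * (Y p.1 - Y p.2)} := by
      rintro ⟨ω, ω'⟩ ⟨⟨h1, h2⟩, h3, h4⟩
      simp only [hA', hB', mem_setOf_eq, not_le] at h1 h2 h3 h4 ⊢
      exact mul_neg_of_neg_of_pos (by linarith) (by linarith)
    have hzero : P (A \ B) * P (B \ A) = 0 := by
      rw [← Measure.prod_prod]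
      exact measure_mono_null hsub hN
    rcases mul_eq_zero.1 hzero with h0 | h0
    · have hPA : P A = P (A ∩ B) := by
        rw [← measure_inter_add_diff A hB, h0, add_zero]
      rw [hABset, ← hPA, min_eq_left]
      rw [hPA]; exact measure_mono inter_subset_right
    · have hPB : P B = P (A ∩ B) := by
        rw [← measure_inter_add_diff B hA, Set.inter_comm B A, h0, add_zero]
      rw [hABset, ← hPB, min_eq_right]
      rw [hPB]; exact measure_mono inter_subset_left
  · -- (ii) → (i)
    intro h
    have h3 := hiff2.1 h
    rw [hmapeq] at h3
    have hf : Measurable (fun p : Ω × Ω => ((X p.1, Y p.1), (X p.2, Y p.2))) :=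
      (hXY.comp measurable_fst).prodMk (hXY.comp measurable_snd)
    have hE : MeasurableSet {q : (ℝ × ℝ) × (ℝ × ℝ) | (q.1.1 - q.2.1) * (q.1.2 - q.2.2) < 0} := by
      have hc : Continuous (fun q : (ℝ × ℝ) × (ℝ × ℝ) => (q.1.1 - q.2.1) * (q.1.2 - q.2.2)) := by
        fun_prop
      exact measurableSet_lt hc.measurable measurable_const
    rw [ae_iff]
    have hset : {p : Ω × Ω | ¬ 0 ≤ (X p.1 - X p.2) * (Y p.1 - Y p.2)} =
        (fun p : Ω × Ω => ((X p.1, Y p.1), (X p.2, Y p.2))) ⁻¹'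
          {q : (ℝ × ℝ) × (ℝ × ℝ) | (q.1.1 - q.2.1) * (q.1.2 - q.2.2) < 0} := by
      ext p; simp [not_le]
    rw [hset, ← Measure.map_apply hf hE]
    have hfmap : (P.prod P).map (fun p : Ω × Ω => ((X p.1, Y p.1), (X p.2, Y p.2))) =
        (ν.prod ν).map
          (Prod.map (fun u => (lq' μX u, lq' μY u)) (fun u => (lq' μX u, lq' μY u))) := by
      rw [← Measure.map_prod_map _ _ hg' hg', ← h3, Measure.map_prod_map _ _ hXY hXY]
      rfl
    rw [hfmap, Measure.map_apply (hg'.prodMap hg') hE]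
    have hemp : (Prod.map (fun u => (lq' μX u, lq' μY u)) (fun u => (lq' μX u, lq' μY u))) ⁻¹'
        {q : (ℝ × ℝ) × (ℝ × ℝ) | (q.1.1 - q.2.1) * (q.1.2 - q.2.2) < 0} = ∅ := by
      rw [Set.eq_empty_iff_forall_notMem]
      rintro ⟨u, v⟩ hq
      simp only [mem_preimage, Prod.map, mem_setOf_eq] at hq
      exact absurd (lq'_comono u v) (not_le.2 hq)
    rw [hemp, measure_empty]
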